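/- arXiv:2308.08440 — 8 statements merged into one kernel-verified Lean document; each statement's English description precedes it below -/
import Mathlib

section
/- Let K be a group and let U ⊆ K. Suppose there is a subset V ⊆ K such that V⁻¹V ⊆ U and V is n-generic in K for some integer n ≥ 1. Then for any group G and any group homomorphism τ : G → K, the set τ⁻¹(U) is n-generic in G. -/
open scoped Pointwise Matrix.Norms.L2Operator

/-- A left-invariant finitely additive probability measure on a group `G`. -/
structure LeftInvariantFAMeasure (G : Type*) [Group G] where
  toFun : Set G → ℝ
  nonneg : ∀ X : Set G, 0 ≤ toFun X
  total : toFun Set.univ = 1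
  additive : ∀ X Y : Set G, Disjoint X Y → toFun (X ∪ Y) = toFun X + toFun Y
  left_invariant : ∀ (g : G) (X : Set G), toFun (g • X) = toFun X

/-- The distance on the unitary group `U(n)` induced by the `ℓ²` operator norm. -/
noncomputable def uDist {n : ℕ} (x y : Matrix.unitaryGroup (Fin n) ℂ) : ℝ :=
  ‖(x : Matrix (Fin n) (Fin n) ℂ) - (y : Matrix (Fin n) (Fin n) ℂ)‖

/-- A subset `A` of a group `G` is `m`-generic if `G` is covered by at most `m`
left translates of `A`. -/
def IsGeneric {G : Type*} [Group G] (m : ℕ) (A : Set G) : Prop :=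
  ∃ F : Finset G, F.card ≤ m ∧ ∀ x : G, ∃ g ∈ F, x ∈ g • A

/-- If `V⁻¹V ⊆ U` and `V` is `n`-generic in `K`, then for any homomorphism
`τ : G → K` the pullback `τ⁻¹(U)` is `n`-generic in `G`. -/
theorem preimage_isGeneric {K : Type*} [Group K] (U V : Set K) (n : ℕ) (hn : 1 ≤ n)
    (hV : V⁻¹ * V ⊆ U) (hgen : IsGeneric n V)
    {G : Type*} [Group G] (τ : G →* K) :
    IsGeneric n (τ ⁻¹' U) := by
  classical
  obtain ⟨F, hF, hcov⟩ := hgen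
  set f : K → G := fun k => if h : ∃ x : G, τ x ∈ k • V then h.choose else 1 with hf_def
  refine ⟨F.image f, (Finset.card_image_le).trans hF, ?_⟩
  intro x
  obtain ⟨k, hk, hxk⟩ := hcov (τ x)
  have hex : ∃ y : G, τ y ∈ k • V := ⟨x, hxk⟩
  refine ⟨f k, Finset.mem_image_of_mem f hk, ?_⟩
  have hfk : τ (f k) ∈ k • V := by
    simp only [hf_def, dif_pos hex]
    exact hex.choose_spec
  obtain ⟨v, hv, hkv⟩ := hxk
  obtain ⟨v', hv', hkv'⟩ := hfk
  have hU : τ ((f k)⁻¹ * x) ∈ U := by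
    apply hV
    have : τ ((f k)⁻¹ * x) = v'⁻¹ * v := by
      have h1 : τ (f k) = k * v' := hkv'.symm
      have h2 : τ x = k * v := hkv.symm
      rw [map_mul, map_inv, h1, h2]
      group
    rw [this]
    exact Set.mul_mem_mul (Set.inv_mem_inv.mpr hv') hv
  exact ⟨(f k)⁻¹ * x, hU, by simp [smul_eq_mul]⟩
end

section
/- Fix an integer r ≥ 1 and let γ_r = |e^{2πi/r} − 1| be the complex distance between e^{2πi/r} and 1. Let G be a group of exponent r (i.e. gʳ = 1 for all g ∈ G), let n ≥ 1, let τ : G → U(n) be a group homomorphism, and let 0 < δ ≤ γ_r. Then the (δ,U(n))-Bohr neighborhood B = τ⁻¹({u ∈ U(n) : d(u,1) < δ}) equals the kernel of τ; in particular B is a normal subgroup of G. -/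
open scoped Pointwise Matrix.Norms.L2Operator

section AuxBohr
open Matrix

private lemma abs_exp_theta (θ : ℝ) :
    (‖Complex.exp (θ * Complex.I) - 1‖)^2 = 2 - 2 * Real.cos θ := by
  rw [Complex.exp_mul_I, ← Complex.ofReal_cos, ← Complex.ofReal_sin, Complex.sq_norm]
  simp [Complex.normSq_apply, Complex.cos_ofReal_re, Complex.sin_ofReal_re]
  nlinarith [Real.sin_sq_add_cos_sq θ]

private lemma cos_le_aux (r k : ℕ) (hr : 2 ≤ r) (hk1 : 1 ≤ k) (hk2 : k ≤ r - 1) :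
    Real.cos (2 * Real.pi * k / r) ≤ Real.cos (2 * Real.pi / r) := by
  have hπ := Real.pi_pos
  have hr' : (2:ℝ) ≤ r := by exact_mod_cast hr
  have hk' : (1:ℝ) ≤ k := by exact_mod_cast hk1
  have hkr : (k:ℝ) + 1 ≤ r := by exact_mod_cast Nat.add_le_of_le_sub (by omega) hk2
  have hrpos : (0:ℝ) < r := by linarith
  set x := 2 * Real.pi * k / r with hx
  set y := 2 * Real.pi / r with hy
  have hy0 : 0 ≤ y := by positivity
  have hyπ : y ≤ Real.pi := by
    rw [hy, div_le_iff₀ hrpos]; nlinarith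
  have hyx : y ≤ x := by
    rw [hx, hy, div_le_div_iff₀ hrpos hrpos]
    nlinarith [mul_nonneg (mul_nonneg hπ.le (sub_nonneg.mpr hk')) hrpos.le]
  have hxy : x + y ≤ 2 * Real.pi := by
    rw [hx, hy, ← add_div, div_le_iff₀ hrpos]; nlinarith
  rcases le_or_gt x Real.pi with h | h
  · exact Real.cos_le_cos_of_nonneg_of_le_pi hy0 h hyx
  · rw [← Real.cos_two_pi_sub x]
    exact Real.cos_le_cos_of_nonneg_of_le_pi hy0 (by linarith) (by linarith)

private lemma root_dist (r : ℕ) (hr : 1 ≤ r) (lam : ℂ) (h1 : lam ^ r = 1) (h2 : lam ≠ 1) :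
    ‖Complex.exp (2 * (Real.pi : ℂ) * Complex.I / (r : ℂ)) - 1‖ ≤
      ‖lam - 1‖ := by
  have hr2 : 2 ≤ r := by
    by_contra h
    have : r = 1 := by omega
    subst this
    simp only [pow_one] at h1
    exact h2 h1
  haveI : NeZero r := ⟨by omega⟩
  obtain ⟨k, hklt, hk⟩ :=
    (Complex.isPrimitiveRoot_exp r (by omega)).eq_pow_of_pow_eq_one h1
  have hk0 : k ≠ 0 := by
    rintro rfl; simp at hk; exact h2 hk.symm
  have ek : ((k:ℂ) * (2 * (Real.pi:ℂ) * Complex.I / (r:ℂ))) =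
      ((2*Real.pi*k/r : ℝ):ℂ) * Complex.I := by push_cast; ring
  have e1 : (2 * (Real.pi:ℂ) * Complex.I / (r:ℂ)) =
      ((2*Real.pi/r : ℝ):ℂ) * Complex.I := by push_cast; ring
  have hlam : lam = Complex.exp (((2*Real.pi*k/r : ℝ):ℂ) * Complex.I) := by
    rw [← hk, ← Complex.exp_nat_mul, ek]
  rw [hlam, e1]
  have A1 := abs_exp_theta (2*Real.pi/r)
  have A2 := abs_exp_theta (2*Real.pi*k/r)
  have hc := cos_le_aux r k hr2 (by omega) (by omega)
  have n1 := norm_nonneg (Complex.exp (((2*Real.pi/r : ℝ):ℂ) * Complex.I) - 1)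
  have n2 := norm_nonneg (Complex.exp (((2*Real.pi*k/r : ℝ):ℂ) * Complex.I) - 1)
  nlinarith

private lemma unitary_eig {n : ℕ} (r : ℕ) (u : Matrix.unitaryGroup (Fin n) ℂ)
    (hu : (u : Matrix (Fin n) (Fin n) ℂ) ^ r = 1)
    (hne : (u : Matrix (Fin n) (Fin n) ℂ) ≠ 1) :
    ∃ lam : ℂ, lam ^ r = 1 ∧ lam ≠ 1 ∧
      ‖lam - 1‖ ≤ ‖(u : Matrix (Fin n) (Fin n) ℂ) - 1‖ := by
  classical
  set U : Matrix (Fin n) (Fin n) ℂ := (u : Matrix (Fin n) (Fin n) ℂ) with hU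
  set T : (Fin n → ℂ) →ₗ[ℂ] (Fin n → ℂ) := Matrix.toLin' U with hT
  have hTne : T - LinearMap.id ≠ 0 := by
    intro h
    apply hne
    have hTid : T = Matrix.toLin' 1 := by
      rw [Matrix.toLin'_one]; exact sub_eq_zero.mp h
    exact Matrix.toLin'.injective hTid
  set W := LinearMap.range (T - LinearMap.id) with hW
  haveI : Nontrivial W := by
    rw [Submodule.nontrivial_iff_ne_bot]
    intro h
    exact hTne (LinearMap.range_eq_bot.mp h)
  have hstab : ∀ x ∈ W, T x ∈ W := by
    rintro x ⟨v, rfl⟩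
    exact ⟨T v, by simp [LinearMap.sub_apply, map_sub]⟩
  obtain ⟨lam, hlam⟩ := Module.End.exists_eigenvalue (T.restrict hstab)
  obtain ⟨w, hw⟩ := hlam.exists_hasEigenvector
  set w0 : Fin n → ℂ := (w : Fin n → ℂ) with hw0
  have hw0ne : w0 ≠ 0 := fun h => hw.2 (Subtype.ext h)
  have hmul : U *ᵥ w0 = lam • w0 := by
    have := congrArg (Subtype.val) hw.apply_eq_smul
    simpa [hT, hw0, LinearMap.restrict_apply, Matrix.toLin'_apply] using this
  -- powers
  have hpow : ∀ m : ℕ, U ^ m *ᵥ w0 = lam ^ m • w0 := by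
    intro m
    induction m with
    | zero => simp [Matrix.one_mulVec]
    | succ m ih =>
      rw [pow_succ, ← Matrix.mulVec_mulVec, hmul, Matrix.mulVec_smul, ih, smul_smul,
        ← pow_succ']
  have hpr : lam ^ r = 1 := by
    have h := hpow r
    rw [hu, Matrix.one_mulVec] at h
    have : (lam ^ r - 1) • w0 = 0 := by
      rw [sub_smul, one_smul, ← h, sub_self]
    rcases smul_eq_zero.mp this with h' | h'
    · exact sub_eq_zero.mp h'
    · exact absurd h' hw0ne
  -- unitarity
  have hunit : Uᴴ * U = 1 := by
    have := (Unitary.mem_iff.mp u.prop).1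
    rwa [Matrix.star_eq_conjTranspose] at this
  have hinner : ∀ x y : Fin n → ℂ,
      dotProduct (star (U *ᵥ x)) (U *ᵥ y) = dotProduct (star x) y := by
    intro x y
    rw [Matrix.star_mulVec, Matrix.dotProduct_mulVec, Matrix.vecMul_vecMul, hunit,
      Matrix.vecMul_one]
  have hlam1 : lam ≠ 1 := by
    rintro rfl
    rw [one_smul] at hmul
    obtain ⟨v, hv⟩ := w.2
    have hv' : U *ᵥ v - v = w0 := by
      have := hv
      simpa [hT, hw0, LinearMap.sub_apply, Matrix.toLin'_apply] using this
    have hzero : dotProduct (star w0) w0 = 0 := by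
      have h1 : dotProduct (star w0) (U *ᵥ v) = dotProduct (star w0) v := by
        calc dotProduct (star w0) (U *ᵥ v)
            = dotProduct (star (U *ᵥ w0)) (U *ᵥ v) := by rw [hmul]
          _ = dotProduct (star w0) v := hinner w0 v
      calc dotProduct (star w0) w0
          = dotProduct (star w0) (U *ᵥ v - v) := by rw [hv']
        _ = dotProduct (star w0) (U *ᵥ v) - dotProduct (star w0) v := by
            rw [dotProduct_sub]
        _ = 0 := by rw [h1, sub_self]
    have hsum : ∑ i, Complex.normSq (w0 i) = 0 := by
      have h2 : ((∑ i, Complex.normSq (w0 i) : ℝ) : ℂ) = 0 := by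
        rw [← hzero]
        simp [dotProduct, Complex.normSq_eq_conj_mul_self]
      exact_mod_cast h2
    refine hw0ne (funext fun i => ?_)
    have := (Finset.sum_eq_zero_iff_of_nonneg
      (fun i _ => Complex.normSq_nonneg (w0 i))).mp hsum i (Finset.mem_univ i)
    exact Complex.normSq_eq_zero.mp this
  -- norm bound
  refine ⟨lam, hpr, hlam1, ?_⟩
  set x : EuclideanSpace ℂ (Fin n) := (EuclideanSpace.equiv (Fin n) ℂ).symm w0 with hx
  have hb := Matrix.l2_opNorm_mulVec (U - 1) x
  have hsub : (U - 1) *ᵥ w0 = (lam - 1) • w0 := by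
    rw [Matrix.sub_mulVec, hmul, Matrix.one_mulVec, sub_smul, one_smul]
  have key : ((EuclideanSpace.equiv (Fin n) ℂ).symm ((U - 1) *ᵥ x) : EuclideanSpace ℂ (Fin n))
      = (lam - 1) • x := congrArg _ hsub
  rw [key, norm_smul] at hb
  have hxne : ‖x‖ ≠ 0 := by
    simp only [norm_ne_zero_iff]
    intro h
    exact hw0ne (by simpa [hx] using congrArg (EuclideanSpace.equiv (Fin n) ℂ) h)
  have hxpos : 0 < ‖x‖ := lt_of_le_of_ne (norm_nonneg x) (Ne.symm hxne)
  have := le_of_mul_le_mul_right (by linarith [hb] : ‖lam - 1‖ * ‖x‖ ≤ ‖U - 1‖ * ‖x‖) hxpos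
  simpa using this

end AuxBohr

/-- In a group of exponent `r`, a `(δ,U(n))`-Bohr neighborhood with
`δ ≤ |e^{2πi/r} - 1|` equals the kernel of the defining homomorphism,
and in particular is a normal subgroup. -/
theorem bohr_eq_ker_of_exponent (r : ℕ) (hr : 1 ≤ r) {G : Type*} [Group G]
    (hexp : ∀ g : G, g ^ r = 1) (n : ℕ) (hn : 1 ≤ n)
    (τ : G →* Matrix.unitaryGroup (Fin n) ℂ) (δ : ℝ) (hδ : 0 < δ)
    (hδr : δ ≤ ‖Complex.exp (2 * (Real.pi : ℂ) * Complex.I / (r : ℂ)) - 1‖) :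
    τ ⁻¹' {u | uDist u 1 < δ} = (τ.ker : Set G) ∧
      ∃ H : Subgroup G, H.Normal ∧ (H : Set G) = τ ⁻¹' {u | uDist u 1 < δ} := by
  have h1 : τ ⁻¹' {u | uDist u 1 < δ} = (τ.ker : Set G) := by
    ext g
    simp only [Set.mem_preimage, Set.mem_setOf_eq, SetLike.mem_coe, MonoidHom.mem_ker]
    constructor
    · intro h
      by_contra hker
      have hcne : (↑(τ g) : Matrix (Fin n) (Fin n) ℂ) ≠ 1 := by
        intro hc
        exact hker (Subtype.ext hc)
      have hupow : (↑(τ g) : Matrix (Fin n) (Fin n) ℂ) ^ r = 1 := by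
        have : τ g ^ r = 1 := by rw [← map_pow, hexp, _root_.map_one]
        have := congrArg (Subtype.val) this
        simpa using this
      obtain ⟨lam, hl1, hl2, hl3⟩ := unitary_eig r (τ g) hupow hcne
      have hd := root_dist r hr lam hl1 hl2
      have : uDist (τ g) 1 = ‖(↑(τ g) : Matrix (Fin n) (Fin n) ℂ) - 1‖ := rfl
      rw [this] at h
      linarith
    · intro h
      rw [h]
      simpa [uDist] using hδ
  refine ⟨h1, τ.ker, inferInstance, h1.symm⟩
end

section
/- Let r ≥ 2 and n ≥ 1 be integers, and let x be an n×n complex unitary matrix with xʳ = 1 and x ≠ 1. Then ‖x − 1‖ ≥ |e^{2πi/r} − 1|, where ‖·‖ is the ℓ² operator norm on matrices. -/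
open Polynomial

lemma abs_exp_theta_sq (θ : ℝ) :
    ‖Complex.exp (θ * Complex.I) - 1‖ ^ 2 = 2 - 2 * Real.cos θ := by
  have h : Complex.exp (θ * Complex.I) - 1
      = Complex.ofReal (Real.cos θ - 1) + Complex.ofReal (Real.sin θ) * Complex.I := by
    rw [Complex.exp_mul_I]
    push_cast
    ring
  rw [h, Complex.sq_norm, Complex.normSq_add_mul_I]
  nlinarith [Real.sin_sq_add_cos_sq θ]

lemma cos_key {r k : ℕ} (hr : 2 ≤ r) (hk1 : 1 ≤ k) (hkr : k < r) :
    Real.cos (2 * Real.pi * k / r) ≤ Real.cos (2 * Real.pi / r) := by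
  have hπ := Real.pi_pos
  have hr0 : (0:ℝ) < r := by positivity
  have hr2 : (2:ℝ) ≤ r := by exact_mod_cast hr
  have hk1' : (1:ℝ) ≤ k := by exact_mod_cast hk1
  have hkr' : (k:ℝ) + 1 ≤ r := by exact_mod_cast hkr
  have h0 : 0 ≤ 2 * Real.pi / r := by positivity
  have hle : 2 * Real.pi / r ≤ 2 * Real.pi * k / r :=
    (div_le_div_iff_of_pos_right hr0).mpr (by nlinarith)
  have key2 : 2 * Real.pi * k / r + 2 * Real.pi / r ≤ 2 * Real.pi := by
    rw [← add_div, div_le_iff₀ hr0]; nlinarith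
  by_cases hc : 2 * Real.pi * k / r ≤ Real.pi
  · exact Real.cos_le_cos_of_nonneg_of_le_pi h0 hc hle
  · rw [← Real.cos_two_pi_sub]
    exact Real.cos_le_cos_of_nonneg_of_le_pi h0 (by linarith) (by linarith)

/-- Any `r`-th root of unity other than 1 is at distance at least `|e^{2πi/r}-1|` from 1. -/
lemma abs_root_sub_one {r : ℕ} (hr : 2 ≤ r) {μ : ℂ} (hμr : μ ^ r = 1) (hμ1 : μ ≠ 1) :
    ‖Complex.exp (2 * (Real.pi : ℂ) * Complex.I / (r : ℂ)) - 1‖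
      ≤ ‖μ - 1‖ := by
  have hr0 : r ≠ 0 := by omega
  have : NeZero r := ⟨hr0⟩
  obtain ⟨k, hk, rfl⟩ := (Complex.isPrimitiveRoot_exp r hr0).eq_pow_of_pow_eq_one hμr
  have hk1 : 1 ≤ k := by
    rcases Nat.eq_zero_or_pos k with h | h
    · exact absurd (by simp [h]) hμ1
    · exact h
  have hrC : (r : ℂ) ≠ 0 := Nat.cast_ne_zero.mpr hr0
  have h1 : 2 * (Real.pi : ℂ) * Complex.I / (r : ℂ)
      = ((2 * Real.pi / r : ℝ) : ℂ) * Complex.I := by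
    push_cast
    field_simp
    try ring
  have h2 : Complex.exp (2 * (Real.pi : ℂ) * Complex.I / (r : ℂ)) ^ k
      = Complex.exp (((2 * Real.pi * k / r : ℝ) : ℂ) * Complex.I) := by
    rw [← Complex.exp_nat_mul]
    congr 1
    push_cast
    field_simp
    try ring
  rw [h2, h1]
  have e1 := abs_exp_theta_sq (2 * Real.pi / r)
  have e2 := abs_exp_theta_sq (2 * Real.pi * k / r)
  have hcos := cos_key hr hk1 hk
  have hA : 0 ≤ ‖Complex.exp (((2 * Real.pi / r : ℝ) : ℂ) * Complex.I) - 1‖ :=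
    norm_nonneg _
  have hB : 0 ≤ ‖Complex.exp (((2 * Real.pi * k / r : ℝ) : ℂ) * Complex.I) - 1‖ :=
    norm_nonneg _
  nlinarith [e1, e2, hcos, hA, hB]

/-- A matrix with `x^r = 1`, `x ≠ 1` has an eigenvalue `μ ≠ 1` with `μ^r = 1`. -/
lemma exists_eigen {r n : ℕ} (hr : 2 ≤ r) (hn : 1 ≤ n) (x : Matrix (Fin n) (Fin n) ℂ)
    (hxr : x ^ r = 1) (hx1 : x ≠ 1) :
    ∃ μ : ℂ, ∃ v : Fin n → ℂ, v ≠ 0 ∧ Matrix.mulVec x v = μ • v ∧ μ ^ r = 1 ∧ μ ≠ 1 := by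
  set f : Module.End ℂ (Fin n → ℂ) := Matrix.toLinAlgEquiv' x with hf
  have hfr : f ^ r = 1 := by rw [hf, ← map_pow, hxr, map_one]
  have hf1 : f ≠ 1 := by
    intro h
    apply hx1
    apply Matrix.toLinAlgEquiv'.injective
    rw [map_one]
    exact h
  have hrne : r ≠ 0 := by omega
  haveI : Nonempty (Fin n) := ⟨⟨0, by omega⟩⟩
  haveI : Nontrivial (Fin n → ℂ) := Function.nontrivial
  have hint : IsIntegral ℂ f := Algebra.IsIntegral.isIntegral f
  set p := minpoly ℂ f with hp
  have hdvd : p ∣ (X : ℂ[X]) ^ r - 1 := by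
    apply minpoly.dvd
    simp [hfr]
  have hXr : ((X : ℂ[X]) ^ r - 1).Separable := by
    have := Polynomial.separable_X_pow_sub_C (F := ℂ) 1 (Nat.cast_ne_zero.mpr hrne) one_ne_zero
    simpa using this
  have hsep : p.Separable := hXr.of_dvd hdvd
  have hmo : p.Monic := minpoly.monic hint
  have hdeg : 0 < p.natDegree := minpoly.natDegree_pos hint
  -- find a root of p different from 1
  have hroot : ∃ μ : ℂ, p.IsRoot μ ∧ μ ≠ 1 := by
    by_contra hcon
    push_neg at hcon
    have hall : ∀ μ ∈ p.roots, μ = 1 := by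
      intro μ hμ
      by_contra h1
      exact h1 (by_contra fun h => h1 (by
        exact absurd ((Polynomial.isRoot_of_mem_roots hμ)) (fun hh => h1 (by
          by_contra _
          exact absurd (hcon μ hh) h1))))
    have hsplit : p.Splits := IsAlgClosed.splits p
    have hprod : p = (Multiset.map (fun a => X - C a) p.roots).prod :=
      hsplit.eq_prod_roots_of_monic hmo
    have hcard : p.roots.card = p.natDegree :=
      (Polynomial.splits_iff_card_roots).mp hsplit
    have hrep : p.roots = Multiset.replicate p.natDegree 1 := by
      rw [Multiset.eq_replicate]
      exact ⟨hcard, hall⟩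
    have hpeq : p = (X - C 1) ^ p.natDegree := by
      conv_lhs => rw [hprod, hrep]
      rw [Multiset.map_replicate, Multiset.prod_replicate]
    have hd1 : p.natDegree = 1 := by
      by_contra hne
      have h2 : 2 ≤ p.natDegree := by omega
      have : (X - C (1:ℂ)) * (X - C 1) ∣ p := by
        rw [hpeq, ← sq]
        exact pow_dvd_pow _ h2
      have := hsep.squarefree (X - C (1:ℂ)) this
      exact (Polynomial.not_isUnit_X_sub_C 1) this
    have hpX : p = X - C 1 := by rw [hpeq, hd1, pow_one]
    have : aeval f p = 0 := minpoly.aeval ℂ f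
    rw [hpX] at this
    simp only [map_sub, aeval_X, aeval_C] at this
    apply hf1
    have h' : f = algebraMap ℂ _ 1 := by
      rwa [sub_eq_zero] at this
    exact h'.trans (map_one _)
  obtain ⟨μ, hμroot, hμ1⟩ := hroot
  have hev : f.HasEigenvalue μ := Module.End.hasEigenvalue_iff_isRoot.mpr hμroot
  obtain ⟨v, hv⟩ := hev.exists_hasEigenvector
  refine ⟨μ, v, hv.2, ?_, ?_, hμ1⟩
  · have := hv.apply_eq_smul
    rw [hf] at this
    rwa [Matrix.toLinAlgEquiv'_apply] at this
  · obtain ⟨q, hq⟩ := hdvd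
    have hz : ((X : ℂ[X]) ^ r - 1).eval μ = 0 := by
      rw [hq, Polynomial.eval_mul, show p.eval μ = 0 from hμroot, zero_mul]
    simpa [sub_eq_zero] using hz

open scoped Matrix.Norms.L2Operator

/-- A nontrivial unitary matrix `x` with `xʳ = 1` satisfies
`‖x - 1‖ ≥ |e^{2πi/r} - 1|` in the `ℓ²` operator norm. -/
theorem norm_sub_one_ge_of_unitary_root_of_unity (r n : ℕ) (hr : 2 ≤ r) (hn : 1 ≤ n)
    (x : Matrix (Fin n) (Fin n) ℂ) (hx : x ∈ Matrix.unitaryGroup (Fin n) ℂ)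
    (hxr : x ^ r = 1) (hx1 : x ≠ 1) :
    ‖Complex.exp (2 * (Real.pi : ℂ) * Complex.I / (r : ℂ)) - 1‖ ≤ ‖x - 1‖ := by
  obtain ⟨μ, v, hv0, hmv, hμr, hμ1⟩ := exists_eigen hr hn x hxr hx1
  refine (abs_root_sub_one hr hμr hμ1).trans ?_
  set w : EuclideanSpace ℂ (Fin n) := (EuclideanSpace.equiv (Fin n) ℂ).symm v with hw
  have hveq : Matrix.mulVec (x - 1) v = (μ - 1) • v := by
    rw [Matrix.sub_mulVec, Matrix.one_mulVec, hmv, sub_smul, one_smul]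
  have hb := Matrix.l2_opNorm_mulVec (x - 1) w
  have hrw : (EuclideanSpace.equiv (Fin n) ℂ).symm (Matrix.mulVec (x - 1) w)
      = (μ - 1) • w := by
    show (EuclideanSpace.equiv (Fin n) ℂ).symm (Matrix.mulVec (x - 1) v) = _
    rw [hveq]
    rfl
  rw [hrw] at hb
  have hwn : ‖(μ - 1) • w‖ = ‖μ - 1‖ * ‖w‖ := by
    rw [norm_smul]
  rw [hwn] at hb
  have hw0 : w ≠ 0 := by
    intro h
    exact hv0 (congrArg (EuclideanSpace.equiv (Fin n) ℂ) h)
  have hwpos : 0 < ‖w‖ := norm_pos_iff.mpr hw0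
  exact le_of_mul_le_mul_right hb hwpos
end

section
/- Let K be a Hausdorff topological group and suppose K contains an abelian subgroup A of finite index (A need not be closed). Then the connected component of the identity in K is abelian, i.e. any two elements of the identity component commute. -/
/-- If a Hausdorff topological group contains an abelian subgroup of finite index,
then its identity component is abelian. -/
theorem identityComponent_abelian_of_finiteIndex_abelian_subgroup
    {K : Type*} [Group K] [TopologicalSpace K] [IsTopologicalGroup K] [T2Space K]
    (A : Subgroup K) (hfin : A.index ≠ 0)
    (hab : ∀ x ∈ A, ∀ y ∈ A, x * y = y * x) :
    ∀ x ∈ connectedComponent (1 : K), ∀ y ∈ connectedComponent (1 : K),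
      x * y = y * x := by
  set B := A.topologicalClosure with hB
  have hle : A ≤ B := Subgroup.le_topologicalClosure A
  have hBfin : B.FiniteIndex :=
    ⟨fun h => hfin (Nat.eq_zero_of_zero_dvd (h ▸ Subgroup.index_dvd_of_le hle))⟩
  have hopen : IsOpen (B : Set K) :=
    Subgroup.isOpen_of_isClosed_of_finiteIndex B (Subgroup.isClosed_topologicalClosure A)
  have hclopen : IsClopen (B : Set K) := ⟨B.isClosed_of_isOpen hopen, hopen⟩
  have hsub : connectedComponent (1 : K) ⊆ (B : Set K) :=
    hclopen.connectedComponent_subset B.one_mem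
  -- B is commutative
  have hBab : ∀ x ∈ B, ∀ y ∈ B, x * y = y * x := by
    intro x hx y hy
    have hcl : closure ((A : Set K) ×ˢ (A : Set K)) ⊆
        {p : K × K | p.1 * p.2 = p.2 * p.1} := by
      apply closure_minimal
      · rintro ⟨a, b⟩ ⟨ha, hb⟩
        exact hab a ha b hb
      · exact isClosed_eq (continuous_fst.mul continuous_snd)
          (continuous_snd.mul continuous_fst)
    have : (x, y) ∈ closure ((A : Set K) ×ˢ (A : Set K)) := by
      rw [closure_prod_eq]
      exact ⟨hx, hy⟩
    exact hcl this
  intro x hx y hy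
  exact hBab x (hsub hx) y (hsub hy)
end

section
/- Let K be a compact Hausdorff topological group with Haar probability measure μ on its Borel σ-algebra. Suppose X ⊆ K is a Borel set with μ(X) > 0 such that for every x ∈ X the centralizer C(x) = {y ∈ K : xy = yx} satisfies μ(C(x)) > 0. Then the connected component of the identity in K is abelian, i.e. any two elements of the identity component commute. -/
open MeasureTheory Pointwise

lemma subgroup_component_subset
    {K : Type*} [Group K] [TopologicalSpace K] [IsTopologicalGroup K]
    [CompactSpace K] [T2Space K] [MeasurableSpace K] [BorelSpace K]
    (μ : Measure K) [μ.IsHaarMeasure] [IsProbabilityMeasure μ]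
    (H : Subgroup K) (hm : MeasurableSet (H : Set K)) (hpos : 0 < μ (H : Set K)) :
    connectedComponent (1 : K) ⊆ (H : Set K) := by
  have h1 : (H : Set K) / (H : Set K) ∈ nhds (1 : K) :=
    μ.div_mem_nhds_one_of_haar_pos (H : Set K) hm hpos
  have hsub : (H : Set K) / (H : Set K) ⊆ (H : Set K) := by
    rintro z ⟨a, ha, b, hb, rfl⟩
    exact H.div_mem ha hb
  have hopen : IsOpen (H : Set K) :=
    H.isOpen_of_mem_nhds (Filter.mem_of_superset h1 hsub)
  have hclopen : IsClopen (H : Set K) := ⟨H.isClosed_of_isOpen hopen, hopen⟩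
  exact hclopen.connectedComponent_subset H.one_mem

/-- If a compact Hausdorff group has a positive-measure Borel set of elements whose
centralizers have positive Haar measure, then its identity component is abelian. -/
theorem identityComponent_abelian_of_positive_measure_centralizers
    {K : Type*} [Group K] [TopologicalSpace K] [IsTopologicalGroup K]
    [CompactSpace K] [T2Space K] [MeasurableSpace K] [BorelSpace K]
    (μ : Measure K) [μ.IsHaarMeasure] [IsProbabilityMeasure μ]
    (X : Set K) (hXmeas : MeasurableSet X) (hXpos : 0 < μ X)
    (hcent : ∀ x ∈ X, 0 < μ {y : K | x * y = y * x}) :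
    ∀ x ∈ connectedComponent (1 : K), ∀ y ∈ connectedComponent (1 : K),
      x * y = y * x := by
  have hclosed : ∀ S : Set K, IsClosed ((Subgroup.centralizer S : Subgroup K) : Set K) := by
    intro S
    have : ((Subgroup.centralizer S : Subgroup K) : Set K) =
        ⋂ g ∈ S, {y : K | g * y = y * g} := by
      ext y
      simp [Subgroup.mem_centralizer_iff]
    rw [this]
    exact isClosed_biInter fun g _ =>
      isClosed_eq (continuous_const.mul continuous_id) (continuous_id.mul continuous_const)
  -- every element of X centralizes the identity component
  have hXC : ∀ z ∈ X, connectedComponent (1 : K) ⊆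
      ((Subgroup.centralizer {z} : Subgroup K) : Set K) := by
    intro z hz
    have hset : ((Subgroup.centralizer {z} : Subgroup K) : Set K) =
        {y : K | z * y = y * z} := by
      ext y; simp [Subgroup.mem_centralizer_iff]
    refine subgroup_component_subset μ _ ((hclosed _).measurableSet) ?_
    rw [hset]; exact hcent z hz
  -- the centralizer of the component contains X
  set Z := Subgroup.centralizer (connectedComponent (1 : K)) with hZ
  have hXZ : X ⊆ (Z : Set K) := by
    intro z hz
    rw [SetLike.mem_coe, Subgroup.mem_centralizer_iff]
    intro g hg
    have := hXC z hz hg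
    rw [SetLike.mem_coe, Subgroup.mem_centralizer_iff] at this
    exact (this z (Set.mem_singleton z)).symm
  have hZpos : 0 < μ (Z : Set K) := lt_of_lt_of_le hXpos (measure_mono hXZ)
  have hcomp : connectedComponent (1 : K) ⊆ (Z : Set K) :=
    subgroup_component_subset μ _ ((hclosed _).measurableSet) hZpos
  intro x hx y hy
  have := hcomp hy
  rw [SetLike.mem_coe, Subgroup.mem_centralizer_iff] at this
  exact this x hx
end

section
/- Let G be a group such that every normal subgroup of G of finite index equals G. Let K be a compact Hausdorff topological group and let τ : G → K be a group homomorphism whose image is dense in K. Then K is connected. -/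
/-- If `G` has no proper normal subgroup of finite index, then any compact Hausdorff
group admitting a homomorphism from `G` with dense image is connected. -/
theorem compactification_connected_of_no_finiteIndex
    {G : Type*} [Group G]
    (hG : ∀ N : Subgroup G, N.Normal → N.index ≠ 0 → N = ⊤)
    {K : Type*} [Group K] [TopologicalSpace K] [IsTopologicalGroup K]
    [CompactSpace K] [T2Space K]
    (τ : G →* K) (hdense : DenseRange τ) :
    ConnectedSpace K := by
  -- First: every clopen set containing 1 is all of K.
  have key : ∀ W : Set K, IsClopen W → (1 : K) ∈ W → W = Set.univ := by
    intro W hW h1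
    obtain ⟨H, hH⟩ := IsTopologicalGroup.exist_openNormalSubgroup_sub_clopen_nhds_of_one hW h1
    have hfin : H.toSubgroup.FiniteIndex := H.toOpenSubgroup.finiteIndex_of_finite_quotient
    have hcomap : (H.toSubgroup.comap τ).index ≠ 0 := by
      rw [Subgroup.index_comap]
      intro h0
      exact hfin.index_ne_zero
        (Nat.eq_zero_of_zero_dvd (h0 ▸ Subgroup.relIndex_dvd_index_of_normal H.toSubgroup τ.range))
    have htop : H.toSubgroup.comap τ = ⊤ :=
      hG _ (Subgroup.Normal.comap H.isNormal' τ) hcomap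
    have hrange : Set.range τ ⊆ (H : Set K) := by
      rintro _ ⟨g, rfl⟩
      have : g ∈ H.toSubgroup.comap τ := htop ▸ Subgroup.mem_top g
      exact this
    have hclosed : IsClosed (H : Set K) := H.toOpenSubgroup.isClosed
    have : (Set.univ : Set K) ⊆ (H : Set K) := by
      rw [← hdense.closure_range]
      exact hclosed.closure_subset_iff.mpr hrange
    exact Set.eq_univ_of_univ_subset (this.trans hH)
  refine { toPreconnectedSpace := ⟨?_⟩, toNonempty := ⟨1⟩ }
  rw [isPreconnected_iff_subset_of_disjoint]
  intro u v hu hv huv hdisj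
  rcases Set.eq_empty_or_nonempty (Set.univ ∩ u) with h | h
  · right
    intro x _
    rcases huv (Set.mem_univ x) with hx | hx
    · exact absurd (Set.eq_empty_iff_forall_notMem.mp h x ⟨trivial, hx⟩) (fun q => q)
    · exact hx
  · left
    -- u is clopen: u = vᶜ up to the cover
    have huniv : u ∪ v = Set.univ := Set.eq_univ_of_univ_subset huv
    have hdisj' : u ∩ v = ∅ := by simpa using hdisj
    have hcompl : u = vᶜ := by
      apply Set.eq_of_subset_of_subset
      · intro x hx hxv
        have : x ∈ u ∩ v := ⟨hx, hxv⟩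
        rw [hdisj'] at this
        exact this
      · intro x hx
        rcases (huniv ▸ Set.mem_univ x : x ∈ u ∪ v) with h' | h'
        · exact h'
        · exact absurd h' hx
    have hclopen : IsClopen u := ⟨hcompl ▸ isClosed_compl_iff.mpr hv, hu⟩
    obtain ⟨x, _, hxu⟩ := h
    -- translate so that 1 ∈ x⁻¹ • u
    have hclopen' : IsClopen ((fun y => x⁻¹ * y) '' u) := by
      have : (fun y => x⁻¹ * y) '' u = (fun y => x * y) ⁻¹' u := by
        ext y; constructor
        · rintro ⟨z, hz, rfl⟩; simpa using hz
        · intro hy; exact ⟨x * y, hy, by group⟩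
      rw [this]
      exact ⟨hclopen.1.preimage (continuous_mul_left x), hclopen.2.preimage (continuous_mul_left x)⟩
    have h1 : (1 : K) ∈ (fun y => x⁻¹ * y) '' u := ⟨x, hxu, by group⟩
    have himg := key _ hclopen' h1
    intro y _
    have hy : x⁻¹ * y ∈ (fun y => x⁻¹ * y) '' u := himg ▸ Set.mem_univ _
    obtain ⟨z, hz, hzeq⟩ := hy
    have : z = y := mul_left_cancel hzeq
    exact this ▸ hz
end

section
/- Let G be a group carrying a left-invariant finitely additive probability measure μ. Suppose U, V, W ⊆ G are such that 1 ∈ U, U = U⁻¹, and U² ⊆ V. If μ(V \ W) < μ(U)/2, then U ⊆ WW⁻¹. -/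
open scoped Pointwise Matrix.Norms.L2Operator

lemma LeftInvariantFAMeasure.mono {G : Type*} [Group G] (μ : LeftInvariantFAMeasure G)
    {X Y : Set G} (h : X ⊆ Y) : μ.toFun X ≤ μ.toFun Y := by
  have hd : Disjoint X (Y \ X) := Set.disjoint_sdiff_right.mono_left le_rfl
  have hu : X ∪ (Y \ X) = Y := Set.union_diff_cancel h
  have := μ.additive X (Y \ X) hd
  rw [hu] at this
  linarith [μ.nonneg (Y \ X)]

lemma LeftInvariantFAMeasure.subadd {G : Type*} [Group G] (μ : LeftInvariantFAMeasure G)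
    (X Y : Set G) : μ.toFun (X ∪ Y) ≤ μ.toFun X + μ.toFun Y := by
  have hd : Disjoint X (Y \ X) := Set.disjoint_sdiff_right
  have hu : X ∪ (Y \ X) = X ∪ Y := by
    ext x; simp [Set.mem_diff]
  have := μ.additive X (Y \ X) hd
  rw [hu] at this
  have := μ.mono (Set.diff_subset : Y \ X ⊆ Y)
  linarith

/-- Covering lemma: if `1 ∈ U = U⁻¹`, `U² ⊆ V` and `μ(V \ W) < μ(U)/2`,
then `U ⊆ WW⁻¹`. -/
theorem subset_mul_inv_of_small_diff {G : Type*} [Group G]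
    (μ : LeftInvariantFAMeasure G) (U V W : Set G)
    (h1 : (1 : G) ∈ U) (hUinv : U = U⁻¹) (hUsq : U * U ⊆ V)
    (hsmall : μ.toFun (V \ W) < μ.toFun U / 2) :
    U ⊆ W * W⁻¹ := by
  intro u hu
  -- U ⊆ V
  have hUV : U ⊆ V := fun x hx => hUsq (by simpa using Set.mul_mem_mul hx h1)
  have huUV : u • U ⊆ V := by
    rintro _ ⟨x, hx, rfl⟩
    exact hUsq (Set.mul_mem_mul hu hx)
  -- measure of W ∩ U is large
  have key : ∀ X : Set G, X ⊆ V → μ.toFun X - μ.toFun (V \ W) ≤ μ.toFun (W ∩ X) := by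
    intro X hXV
    have hsub : X ⊆ (W ∩ X) ∪ (V \ W) := by
      intro x hx
      by_cases hw : x ∈ W
      · exact Or.inl ⟨hw, hx⟩
      · exact Or.inr ⟨hXV hx, hw⟩
    have := μ.mono hsub
    have := μ.subadd (W ∩ X) (V \ W)
    linarith
  have hA : μ.toFun U - μ.toFun (V \ W) ≤ μ.toFun (W ∩ U) := key U hUV
  have hB : μ.toFun U - μ.toFun (V \ W) ≤ μ.toFun (W ∩ u • U) := by
    have := key (u • U) huUV
    rwa [μ.left_invariant u U] at this
  -- translate of W ∩ U
  have hBt : μ.toFun (u • (W ∩ U)) = μ.toFun (W ∩ U) := μ.left_invariant u _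
  -- the two sets intersect
  have hne : ¬ Disjoint (W ∩ u • U) (u • (W ∩ U)) := by
    intro hd
    have hadd := μ.additive _ _ hd
    have hsub : (W ∩ u • U) ∪ (u • (W ∩ U)) ⊆ u • U := by
      apply Set.union_subset
      · exact Set.inter_subset_right
      · rw [Set.smul_set_inter]
        exact Set.inter_subset_right
    have hmono := μ.mono hsub
    rw [μ.left_invariant u U] at hmono
    linarith
  rw [Set.not_disjoint_iff] at hne
  obtain ⟨x, ⟨hxW, y, hyU, rfl⟩, hx2⟩ := hne
  rw [Set.smul_set_inter] at hx2
  obtain ⟨⟨w, hwW, hw⟩, -⟩ := hx2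
  -- u * y = u * w, both in W
  refine ⟨u * y, hxW, w⁻¹, Set.inv_mem_inv.mpr hwW, ?_⟩
  simp only [smul_eq_mul] at hw
  rw [← hw]
  group
end

section
/- Let X be a Hausdorff topological space such that every nonempty closed subset A ⊆ X is a retract of X, i.e. there exists a continuous map r : X → A whose restriction to A is the identity. Then X has a basis of clopen sets: for every point x ∈ X and every open set U containing x, there exists a clopen set V with x ∈ V ⊆ U. -/
/-- A Hausdorff space in which every nonempty closed subset is a retract has a basis
of clopen sets. -/
theorem clopen_basis_of_closed_retracts
    {X : Type*} [TopologicalSpace X] [T2Space X]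
    (hretr : ∀ A : Set X, A.Nonempty → IsClosed A →
      ∃ r : X → X, Continuous r ∧ Set.range r ⊆ A ∧ ∀ a ∈ A, r a = a) :
    ∀ (x : X) (U : Set X), x ∈ U → IsOpen U →
      ∃ V : Set X, IsClopen V ∧ x ∈ V ∧ V ⊆ U := by
  intro x U hxU hU
  set A : Set X := Uᶜ ∪ {x} with hA
  obtain ⟨r, hr, hrange, hfix⟩ := hretr A ⟨x, Or.inr rfl⟩
    ((hU.isClosed_compl).union isClosed_singleton)
  have hrx : r x = x := hfix x (Or.inr rfl)
  have hkey : r ⁻¹' U = r ⁻¹' {x} := by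
    ext y
    simp only [Set.mem_preimage, Set.mem_singleton_iff]
    constructor
    · intro hy
      rcases hrange ⟨y, rfl⟩ with h | h
      · exact absurd hy h
      · exact h
    · intro h; rw [h]; exact hxU
  refine ⟨r ⁻¹' U, ⟨?_, hU.preimage hr⟩, by simp [hrx, hxU], ?_⟩
  · rw [hkey]; exact isClosed_singleton.preimage hr
  · intro y hy
    rw [hkey, Set.mem_preimage, Set.mem_singleton_iff] at hy
    by_contra hyU
    have : r y = y := hfix y (Or.inl hyU)
    rw [this] at hy
    exact hyU (hy ▸ hxU)
end
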